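/- Let X be a quiver, let Δ : X ⥤q X × X be the diagonal prefunctor into the product quiver (sending a vertex a to (a,a) and an arrow e to (e,e)), and let fst, snd : X × X ⥤q X be the two projection prefunctors. Then: (1) for every path p from a to b in X, fst.mapPath (Δ.mapPath p) = p and snd.mapPath (Δ.mapPath p) = p; and (2) conversely, every path π from (a,a) to (b,b) in X × X whose two projections are equal, i.e. fst.mapPath π = snd.mapPath π, satisfies π = Δ.mapPath (fst.mapPath π). -/

import Mathlib

open Quiver

universe u v

/-- The product quiver: an arrow `(a,c) ⟶ (b,d)` is a pair of an arrow `a ⟶ b`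
and an arrow `c ⟶ d`. -/
instance prodQuiver (X Y : Type u) [Quiver.{v+1} X] [Quiver.{v+1} Y] : Quiver (X × Y) :=
  ⟨fun p q => (p.1 ⟶ q.1) × (p.2 ⟶ q.2)⟩

/-- The diagonal prefunctor `Δ : X ⥤q (X × X)`. -/
def diagPrefunctor (X : Type u) [Quiver.{v+1} X] : X ⥤q (X × X) where
  obj a := (a, a)
  map e := (e, e)

/-- The first projection prefunctor `X × X ⥤q X`. -/
def fstPrefunctor (X : Type u) [Quiver.{v+1} X] : (X × X) ⥤q X where
  obj p := p.1
  map e := e.1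

/-- The second projection prefunctor `X × X ⥤q X`. -/
def sndPrefunctor (X : Type u) [Quiver.{v+1} X] : (X × X) ⥤q X where
  obj p := p.2
  map e := e.2

lemma aux1 {X : Type u} [Quiver.{v+1} X] {a b : X} (p : Path a b) :
    (fstPrefunctor X).mapPath ((diagPrefunctor X).mapPath p) = p ∧
    (sndPrefunctor X).mapPath ((diagPrefunctor X).mapPath p) = p := by
  induction p with
  | nil => exact ⟨rfl, rfl⟩
  | cons q e ih =>
    simp only [Prefunctor.mapPath_cons]
    exact ⟨by rw [ih.1]; rfl, by rw [ih.2]; rfl⟩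

lemma aux2 {X : Type u} [Quiver.{v+1} X] (a : X) :
    ∀ (p : X × X) (π : Path ((a, a) : X × X) p),
      (⟨p.1, (fstPrefunctor X).mapPath π⟩ : Σ c, Path a c) =
        ⟨p.2, (sndPrefunctor X).mapPath π⟩ →
      (⟨p, π⟩ : Σ q, Path ((a, a) : X × X) q) =
        ⟨(p.1, p.1), (diagPrefunctor X).mapPath ((fstPrefunctor X).mapPath π)⟩ := by
  intro p π
  induction π with
  | nil => intro; rfl
  | @cons c p π' e ih =>
    intro h
    obtain ⟨b₁, b₂⟩ := p
    have h1 : b₁ = b₂ := congrArg Sigma.fst h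

    subst h1
    have h2' : (fstPrefunctor X).mapPath (π'.cons e) = (sndPrefunctor X).mapPath (π'.cons e) :=
      eq_of_heq (Sigma.mk.inj_iff.mp h).2
    simp only [Prefunctor.mapPath_cons] at h2'
    injection h2' with hmid hend htail harr
    obtain ⟨c₁, c₂⟩ := c
    change c₁ = c₂ at hmid
    subst hmid
    obtain ⟨e₁, e₂⟩ := e
    have h4' : e₁ = e₂ := eq_of_heq harr
    subst h4'
    have h3' : (fstPrefunctor X).mapPath π' = (sndPrefunctor X).mapPath π' := eq_of_heq htail
    have hih := ih (by rw [h3'])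
    have hπ : π' = (diagPrefunctor X).mapPath ((fstPrefunctor X).mapPath π') :=
      eq_of_heq (Sigma.mk.inj_iff.mp hih).2
    simp only [Prefunctor.mapPath_cons]
    exact congrArg (fun q : Path ((a, a) : X × X) (c₁, c₁) =>
      (⟨(b₁, b₁), q.cons ((e₁, e₁) : (c₁, c₁) ⟶ (b₁, b₁))⟩ : Σ q, Path ((a, a) : X × X) q)) hπ

/-- (1) For every path `p` from `a` to `b` in `X`, both projections of the
diagonal image of `p` equal `p`; (2) conversely every path `π` from `(a,a)` to `(b,b)` in
`X × X` whose two projections agree is the diagonal image of its first projection. -/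
theorem statement2 (X : Type u) [Quiver.{v+1} X] (a b : X) :
    (∀ p : Path a b,
      (fstPrefunctor X).mapPath ((diagPrefunctor X).mapPath p) = p ∧
      (sndPrefunctor X).mapPath ((diagPrefunctor X).mapPath p) = p) ∧
    (∀ π : Path ((a, a) : X × X) (b, b),
      (fstPrefunctor X).mapPath π = (sndPrefunctor X).mapPath π →
      π = (diagPrefunctor X).mapPath ((fstPrefunctor X).mapPath π)) := by
  refine ⟨fun p => aux1 p, fun π h => ?_⟩
  have := aux2 a (b, b) π (by rw [h])
  exact eq_of_heq (Sigma.mk.inj_iff.mp this).2
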